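/- For every odd prime p and every even m with 2 ≤ m ≤ p-3, S_m = ∑_{l=1}^{p-1} l^m ≡ p·B_m mod p² (in Z_p), where B_m is the m-th Bernoulli number. -/

import Mathlib

open Finset

variable (p : ℕ) [hp : Fact p.Prime]

-- norm of nat in (0,p) is 1
lemma norm_nat_eq_one (n : ℕ) (h0 : 0 < n) (h1 : n < p) : ‖(n : ℚ_[p])‖ = 1 := by
  refine le_antisymm (by exact_mod_cast Padic.norm_int_le_one (n : ℤ)) ?_
  by_contra hlt
  push_neg at hlt
  have : ((p : ℤ)) ∣ (n : ℤ) := by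
    rw [← Padic.norm_intCast_lt_one_iff]
    exact_mod_cast hlt
  have := Int.le_of_dvd (by exact_mod_cast h0) this
  omega

-- p divides the power sum for n < p - 1
lemma dvd_power_sum (n : ℕ) (hn : n < p - 1) :
    (p : ℤ) ∣ ∑ k ∈ range p, (k : ℤ) ^ n := by
  have h := FiniteField.sum_pow_lt_card_sub_one (K := ZMod p)
    n (by simpa [ZMod.card] using hn)
  have hcast : ((∑ k ∈ range p, (k : ℤ) ^ n : ℤ) : ZMod p) = ∑ x : ZMod p, x ^ n := by
    push_cast
    refine Finset.sum_nbij' (fun k => (k : ZMod p)) (fun x => x.val) ?_ ?_ ?_ ?_ ?_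
    · intro a _; exact Finset.mem_univ _
    · intro x _
      exact Finset.mem_range.mpr (ZMod.val_lt x)
    · intro a ha
      exact ZMod.val_cast_of_lt (Finset.mem_range.mp ha)
    · intro x _
      exact ZMod.natCast_rightInverse x
    · intro a _; rfl
  rw [← ZMod.intCast_zmod_eq_zero_iff_dvd, hcast, h]

lemma bernoulli_norm_le_one : ∀ n : ℕ, 0 < n → n < p - 1 →
    ‖((bernoulli n : ℚ) : ℚ_[p])‖ ≤ 1 := by
  intro n
  induction n using Nat.strong_induction_on with
  | _ n IH =>
    intro hn0 hn1
    have hpn : (n : ℝ) + 1 < p := by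
      have : n + 1 < p := by omega
      exact_mod_cast this
    -- the power-sum identity over ℚ_[p]
    have key : (∑ k ∈ range p, ((k : ℚ_[p])) ^ n) =
        ∑ i ∈ range (n + 1),
          ((bernoulli i : ℚ) : ℚ_[p]) * ((n + 1).choose i : ℚ_[p]) * (p : ℚ_[p]) ^ (n + 1 - i)
            / ((n : ℚ_[p]) + 1) := by
      have h := sum_range_pow p n
      have := congrArg (fun q : ℚ => (q : ℚ_[p])) h
      push_cast at this ⊢
      convert this using 2
    -- isolate the last term
    rw [Finset.sum_range_succ] at key
    have hlast : ((bernoulli n : ℚ) : ℚ_[p]) * ((n + 1).choose n : ℚ_[p]) * (p : ℚ_[p]) ^ (n + 1 - n)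
        / ((n : ℚ_[p]) + 1) = ((bernoulli n : ℚ) : ℚ_[p]) * (p : ℚ_[p]) := by
      have h1 : n + 1 - n = 1 := by omega
      have h2 : ((n + 1).choose n : ℚ_[p]) = (n : ℚ_[p]) + 1 := by
        rw [Nat.choose_succ_self_right]; push_cast; ring
      have h3 : ((n : ℚ_[p]) + 1) ≠ 0 := by
        exact_mod_cast (Nat.cast_add_one_ne_zero n : ((n : ℚ_[p]) + 1) ≠ 0)
      rw [h1, h2]
      field_simp
    rw [hlast] at key
    have keyB : ((bernoulli n : ℚ) : ℚ_[p]) * (p : ℚ_[p]) =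
        (∑ k ∈ range p, ((k : ℚ_[p])) ^ n) - ∑ i ∈ range n,
          ((bernoulli i : ℚ) : ℚ_[p]) * ((n + 1).choose i : ℚ_[p]) * (p : ℚ_[p]) ^ (n + 1 - i)
            / ((n : ℚ_[p]) + 1) := by
      rw [key]; ring
    have hpinv : (0:ℝ) < (p:ℝ)⁻¹ := by
      have : (0:ℝ) < p := by exact_mod_cast hp.out.pos
      positivity
    have hA : ‖∑ k ∈ range p, ((k : ℚ_[p])) ^ n‖ ≤ (p:ℝ)⁻¹ := by
      have hc : (∑ k ∈ range p, ((k : ℚ_[p])) ^ n) =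
          (((∑ k ∈ range p, (k : ℤ) ^ n : ℤ)) : ℚ_[p]) := by push_cast; rfl
      rw [hc]
      have := (Padic.norm_int_le_pow_iff_dvd (p := p)
        (∑ k ∈ range p, (k : ℤ) ^ n) 1).mpr (by simpa using dvd_power_sum p n hn1)
      simpa using this
    have hT : ‖∑ i ∈ range n,
        ((bernoulli i : ℚ) : ℚ_[p]) * ((n + 1).choose i : ℚ_[p]) * (p : ℚ_[p]) ^ (n + 1 - i)
          / ((n : ℚ_[p]) + 1)‖ ≤ (p:ℝ)⁻¹ := by
      apply IsUltrametricDist.norm_sum_le_of_forall_le_of_nonneg hpinv.le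
      intro i hi
      have hi' : i < n := Finset.mem_range.mp hi
      have hBi : ‖((bernoulli i : ℚ) : ℚ_[p])‖ ≤ 1 := by
        rcases Nat.eq_zero_or_pos i with h0 | h0
        · subst h0; simp
        · exact IH i hi' h0 (by omega)
      have hden : ‖(n : ℚ_[p]) + 1‖ = 1 := by
        have := norm_nat_eq_one p (n+1) (by omega) (by omega)
        push_cast at this
        exact this
      have hchoose : ‖((n + 1).choose i : ℚ_[p])‖ ≤ 1 := by
        exact_mod_cast Padic.norm_int_le_one (((n+1).choose i : ℤ))
      have hpow : ‖(p : ℚ_[p]) ^ (n + 1 - i)‖ ≤ (p:ℝ)⁻¹ := by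
        rw [norm_pow, Padic.norm_p]
        calc ((p:ℝ)⁻¹) ^ (n + 1 - i) ≤ ((p:ℝ)⁻¹) ^ 1 := by
              apply pow_le_pow_of_le_one hpinv.le ?_ (by omega)
              rw [inv_le_one_iff₀]
              right; exact_mod_cast hp.out.one_lt.le
          _ = (p:ℝ)⁻¹ := pow_one _
      rw [norm_div, norm_mul, norm_mul, hden, div_one]
      calc ‖((bernoulli i : ℚ) : ℚ_[p])‖ * ‖((n + 1).choose i : ℚ_[p])‖ * ‖(p : ℚ_[p]) ^ (n + 1 - i)‖
          ≤ 1 * 1 * (p:ℝ)⁻¹ := by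
            apply mul_le_mul (mul_le_mul hBi hchoose (norm_nonneg _) zero_le_one) hpow
              (norm_nonneg _) (by norm_num)
        _ = (p:ℝ)⁻¹ := by ring
    have hfinal : ‖((bernoulli n : ℚ) : ℚ_[p]) * (p : ℚ_[p])‖ ≤ (p:ℝ)⁻¹ := by
      rw [keyB, sub_eq_add_neg]
      exact (IsUltrametricDist.norm_add_le_max _ _).trans
        (max_le hA (by simpa using hT))
    rw [norm_mul, Padic.norm_p] at hfinal
    calc ‖((bernoulli n : ℚ) : ℚ_[p])‖ = ‖((bernoulli n : ℚ) : ℚ_[p])‖ * (p:ℝ)⁻¹ * p := by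
          field_simp [(inv_pos.mp hpinv).ne']
      _ ≤ (p:ℝ)⁻¹ * p := by
          apply mul_le_mul_of_nonneg_right hfinal (by positivity)
      _ = 1 := by field_simp [(inv_pos.mp hpinv).ne']

theorem stmt_13 (p m : ℕ) [hp : Fact p.Prime] (hodd : Odd p)
    (hm : Even m) (hm2 : 2 ≤ m) (hm3 : m ≤ p - 3) :
    ∃ z : ℤ_[p], (∑ l ∈ Finset.Icc 1 (p - 1), (l : ℚ_[p]) ^ m) =
      (p : ℚ_[p]) * (bernoulli m : ℚ_[p]) + (p : ℚ_[p]) ^ 2 * z := by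
  have hp5 : 5 ≤ p := by
    have h3 := hp.out.two_le
    rcases hodd with ⟨k, hk⟩
    omega
  -- convert the sum over Icc to a sum over range
  have hIcc : (∑ l ∈ Finset.Icc 1 (p - 1), (l : ℚ_[p]) ^ m) =
      ∑ k ∈ range p, ((k : ℚ_[p])) ^ m := by
    rw [Finset.range_eq_Ico, Finset.sum_eq_sum_Ico_succ_bot (by omega : 0 < p)]
    have : Finset.Icc 1 (p - 1) = Finset.Ico 1 p := by
      rw [← Finset.Ico_add_one_right_eq_Icc]
      congr 1
      omega
    rw [this]
    simp [zero_pow (by omega : m ≠ 0)]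
  -- power-sum identity
  have hpm : m + 1 < p := by omega
  have key : (∑ k ∈ range p, ((k : ℚ_[p])) ^ m) =
      ∑ i ∈ range (m + 1),
        ((bernoulli i : ℚ) : ℚ_[p]) * ((m + 1).choose i : ℚ_[p]) * (p : ℚ_[p]) ^ (m + 1 - i)
          / ((m : ℚ_[p]) + 1) := by
    have h := sum_range_pow p m
    have := congrArg (fun q : ℚ => (q : ℚ_[p])) h
    push_cast at this ⊢
    convert this using 2
  rw [Finset.sum_range_succ] at key
  have hlast : ((bernoulli m : ℚ) : ℚ_[p]) * ((m + 1).choose m : ℚ_[p]) * (p : ℚ_[p]) ^ (m + 1 - m)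
      / ((m : ℚ_[p]) + 1) = (p : ℚ_[p]) * ((bernoulli m : ℚ) : ℚ_[p]) := by
    have h1 : m + 1 - m = 1 := by omega
    have h2 : ((m + 1).choose m : ℚ_[p]) = (m : ℚ_[p]) + 1 := by
      rw [Nat.choose_succ_self_right]; push_cast; ring
    have h3 : ((m : ℚ_[p]) + 1) ≠ 0 := Nat.cast_add_one_ne_zero m
    rw [h1, h2]
    field_simp
  rw [hlast] at key
  set T := ∑ i ∈ range m,
      ((bernoulli i : ℚ) : ℚ_[p]) * ((m + 1).choose i : ℚ_[p]) * (p : ℚ_[p]) ^ (m + 1 - i)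
        / ((m : ℚ_[p]) + 1) with hT
  have hppos : (0:ℝ) < (p:ℝ) := by exact_mod_cast hp.out.pos
  have hpinv : (0:ℝ) < (p:ℝ)⁻¹ := by positivity
  have hinvle : (p:ℝ)⁻¹ ≤ 1 := by
    rw [inv_le_one_iff₀]; right; exact_mod_cast hp.out.one_lt.le
  have hTnorm : ‖T‖ ≤ ((p:ℝ)⁻¹) ^ 2 := by
    apply IsUltrametricDist.norm_sum_le_of_forall_le_of_nonneg (by positivity)
    intro i hi
    have hi' : i < m := Finset.mem_range.mp hi
    have hBi : ‖((bernoulli i : ℚ) : ℚ_[p])‖ ≤ 1 := by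
      rcases Nat.eq_zero_or_pos i with h0 | h0
      · subst h0; simp
      · exact bernoulli_norm_le_one p i h0 (by omega)
    have hden : ‖(m : ℚ_[p]) + 1‖ = 1 := by
      have := norm_nat_eq_one p (m+1) (by omega) (by omega)
      push_cast at this
      exact this
    have hchoose : ‖((m + 1).choose i : ℚ_[p])‖ ≤ 1 := by
      exact_mod_cast Padic.norm_int_le_one (((m+1).choose i : ℤ))
    have hpow : ‖(p : ℚ_[p]) ^ (m + 1 - i)‖ ≤ ((p:ℝ)⁻¹) ^ 2 := by
      rw [norm_pow, Padic.norm_p]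
      exact pow_le_pow_of_le_one hpinv.le hinvle (by omega)
    rw [norm_div, norm_mul, norm_mul, hden, div_one]
    calc ‖((bernoulli i : ℚ) : ℚ_[p])‖ * ‖((m + 1).choose i : ℚ_[p])‖ * ‖(p : ℚ_[p]) ^ (m + 1 - i)‖
        ≤ 1 * 1 * ((p:ℝ)⁻¹) ^ 2 := by
          apply mul_le_mul (mul_le_mul hBi hchoose (norm_nonneg _) zero_le_one) hpow
            (norm_nonneg _) (by norm_num)
      _ = ((p:ℝ)⁻¹) ^ 2 := by ring
  have hpne : (p : ℚ_[p]) ≠ 0 := by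
    exact_mod_cast (Nat.cast_ne_zero.mpr hp.out.ne_zero : ((p:ℕ) : ℚ_[p]) ≠ 0)
  have hznorm : ‖T / (p : ℚ_[p]) ^ 2‖ ≤ 1 := by
    rw [norm_div, norm_pow, Padic.norm_p, div_le_one (by positivity)]
    calc ‖T‖ ≤ ((p:ℝ)⁻¹) ^ 2 := hTnorm
      _ = ((p:ℝ)⁻¹) ^ 2 := rfl
  refine ⟨⟨T / (p : ℚ_[p]) ^ 2, hznorm⟩, ?_⟩
  rw [hIcc, key]
  show T + (p : ℚ_[p]) * _ = _ + (p : ℚ_[p]) ^ 2 * (T / (p : ℚ_[p]) ^ 2)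
  have : (bernoulli m : ℚ_[p]) = ((bernoulli m : ℚ) : ℚ_[p]) := by norm_cast
  rw [this]
  field_simp
  ring
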